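/- Let Γ be a group acting by isometries on a geodesic Gromov-hyperbolic metric space X, z_0 ∈ X, and μ a non-elementary probability measure on Γ. Then there is p ∈ ℕ such that the support of the p-fold convolution μ^{*p} contains a Schottky set. -/

import Mathlib

open MeasureTheory ProbabilityTheory Filter Topology Pointwise

noncomputable section

namespace BMS

/-- The Gromov product `(y,z)_x := (d(y,x) + d(z,x) - d(y,z))/2`. -/
def gp {X : Type*} [MetricSpace X] (x y z : X) : ℝ :=
  (dist y x + dist z x - dist y z) / 2

/-- `X` is `δ`-hyperbolic. -/
def HypWith (δ : ℝ) (X : Type*) [MetricSpace X] : Prop :=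
  ∀ x₀ x₁ x₂ x₃ : X, min (gp x₀ x₃ x₁) (gp x₀ x₃ x₂) - δ ≤ gp x₀ x₁ x₂

/-- `X` is Gromov-hyperbolic. -/
def GromovHyperbolic (X : Type*) [MetricSpace X] : Prop :=
  ∃ δ : ℝ, 0 < δ ∧ HypWith δ X

/-- `X` is a geodesic metric space: any two points are joined by an isometrically
parametrized path. -/
def GeodesicSpace (X : Type*) [MetricSpace X] : Prop :=
  ∀ x y : X, ∃ f : ℝ → X, f 0 = x ∧ f (dist x y) = y ∧
    ∀ s ∈ Set.Icc (0 : ℝ) (dist x y), ∀ t ∈ Set.Icc (0 : ℝ) (dist x y),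
      dist (f s) (f t) = |s - t|

/-- The action of `Γ` on `X` is by isometries. -/
def IsIsomAction (Γ X : Type*) [Group Γ] [MetricSpace X] [MulAction Γ X] : Prop :=
  ∀ (g : Γ) (x y : X), dist (g • x) (g • y) = dist x y

/-- The positions of the random walk: `walk ω n = ω 1 * ⋯ * ω n`. -/
def walk {Γ Ω : Type*} [Group Γ] (ω : ℕ → Ω → Γ) : ℕ → Ω → Γ
  | 0 => fun _ => 1
  | n + 1 => fun ρ => walk ω n ρ * ω (n + 1) ρ

/-- Extended-real valued logarithm of an extended nonnegative real, with `elog 0 = ⊥`. -/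
def elog (x : ENNReal) : EReal :=
  if x = 0 then ⊥ else ((Real.log x.toReal : ℝ) : EReal)

/-- `(1/n)·log P(Z n ∈ R)`, as an extended real number. -/
def logProbRate {Ω : Type*} [MeasurableSpace Ω] (P : Measure Ω) (Z : ℕ → Ω → ℝ)
    (R : Set ℝ) (n : ℕ) : EReal :=
  (((n : ℝ)⁻¹ : ℝ) : EReal) * elog (P {ρ | Z n ρ ∈ R})

/-- The sequence of real random variables `Z n` satisfies a (full) large deviation
principle under `P` with rate function `I`. -/
def HasLDP {Ω : Type*} [MeasurableSpace Ω] (P : Measure Ω) (Z : ℕ → Ω → ℝ)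
    (I : ℝ → ENNReal) : Prop :=
  LowerSemicontinuous I ∧
  ∀ R : Set ℝ, MeasurableSet R →
    (-(⨅ α ∈ interior R, ((I α : EReal))) ≤ liminf (logProbRate P Z R) atTop ∧
      limsup (logProbRate P Z R) atTop ≤ -(⨅ α ∈ closure R, ((I α : EReal))))

/-- Weak large deviation principle: the lower bound holds for all measurable sets and
the upper bound for bounded measurable sets. -/
def HasWeakLDP {Ω : Type*} [MeasurableSpace Ω] (P : Measure Ω) (Z : ℕ → Ω → ℝ)
    (I : ℝ → ENNReal) : Prop :=
  LowerSemicontinuous I ∧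
  ∀ R : Set ℝ, MeasurableSet R →
    (-(⨅ α ∈ interior R, ((I α : EReal))) ≤ liminf (logProbRate P Z R) atTop ∧
      (Bornology.IsBounded R →
        limsup (logProbRate P Z R) atTop ≤ -(⨅ α ∈ closure R, ((I α : EReal)))))

/-- Convexity of an `[0,∞]`-valued function on `ℝ`. -/
def ConvexRate (I : ℝ → ENNReal) : Prop :=
  ∀ x y t : ℝ, 0 ≤ t → t ≤ 1 →
    I (t * x + (1 - t) * y) ≤ ENNReal.ofReal t * I x + ENNReal.ofReal (1 - t) * I y

/-- A rate function is proper if its sublevel sets are compact. -/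
def ProperRate (I : ℝ → ENNReal) : Prop :=
  ∀ c : ENNReal, c ≠ ⊤ → IsCompact {x : ℝ | I x ≤ c}

/-- The support of a measure on a countable discrete space. -/
def measSupport {Γ : Type*} [MeasurableSpace Γ] (μ : Measure Γ) : Set Γ :=
  {g | μ {g} ≠ 0}

/-- `S` is a Schottky set with respect to the basepoint `z0`. -/
def IsSchottky {Γ X : Type*} [Group Γ] [MetricSpace X] [MulAction Γ X]
    (z0 : X) (S : Set Γ) : Prop :=
  S.Finite ∧ S.Nonempty ∧ ∃ C : ℝ, 0 < C ∧ ∀ y z : X,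
    (2 / 3 : ℝ) * (S.ncard : ℝ) ≤ (({s ∈ S | gp z0 y (s • z) ≤ C} : Set Γ).ncard : ℝ)

/-- `u : ℤ → X` is a quasi-geodesic. -/
def QuasiGeodZ {X : Type*} [MetricSpace X] (u : ℤ → X) : Prop :=
  ∃ lam C : ℝ, 1 ≤ lam ∧ 0 ≤ C ∧ ∀ m n : ℤ,
    lam⁻¹ * |(m : ℝ) - (n : ℝ)| - C ≤ dist (u m) (u n) ∧
      dist (u m) (u n) ≤ lam * |(m : ℝ) - (n : ℝ)| + C

/-- `g` is a loxodromic isometry: some (equivalently, any) orbit map `n ↦ g^n • x`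
is a quasi-geodesic. -/
def IsLoxodromic (X : Type*) {Γ : Type*} [MetricSpace X] [Group Γ] [MulAction Γ X]
    (g : Γ) : Prop :=
  ∃ x : X, QuasiGeodZ (fun n : ℤ => (g ^ n) • x)

/-- The forward (`s = true`) or backward (`s = false`) orbit ray of `g` from `z0`. -/
def raySeq {Γ X : Type*} [Group Γ] [MetricSpace X] [MulAction Γ X]
    (z0 : X) (g : Γ) (s : Bool) : ℕ → X :=
  fun n => (g ^ (if s then (n : ℤ) else -(n : ℤ))) • z0

/-- Two sequences define the same point of the Gromov boundary. -/
def SameEnd {X : Type*} [MetricSpace X] (z0 : X) (u v : ℕ → X) : Prop :=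
  Tendsto (fun n => gp z0 (u n) (v n)) atTop atTop

/-- `g` and `h` are independent loxodromic elements: both are loxodromic and their
four boundary fixed points are pairwise distinct. -/
def IndepLox {Γ X : Type*} [Group Γ] [MetricSpace X] [MulAction Γ X]
    (z0 : X) (g h : Γ) : Prop :=
  IsLoxodromic X g ∧ IsLoxodromic X h ∧
  (¬ SameEnd z0 (raySeq z0 g true) (raySeq z0 g false)) ∧
  (¬ SameEnd z0 (raySeq z0 h true) (raySeq z0 h false)) ∧
  (∀ s t : Bool, ¬ SameEnd z0 (raySeq z0 g s) (raySeq z0 h t))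

/-- A set `B` of isometries is non-elementary: the subsemigroup it generates contains
two independent loxodromic elements. -/
def NonElementarySet {Γ X : Type*} [Group Γ] [MetricSpace X] [MulAction Γ X]
    (z0 : X) (B : Set Γ) : Prop :=
  ∃ g h : Γ, g ∈ Subsemigroup.closure B ∧ h ∈ Subsemigroup.closure B ∧ IndepLox z0 g h

/-- A probability measure is non-elementary if its support is. -/
def NonElementary {Γ X : Type*} [Group Γ] [MeasurableSpace Γ] [MetricSpace X] [MulAction Γ X]
    (z0 : X) (μ : Measure Γ) : Prop :=
  NonElementarySet z0 (measSupport μ)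

/-- The translation length `τ(g) := inf_x d(x, g•x)`. -/
def translationLength (X : Type*) {Γ : Type*} [MetricSpace X] [Group Γ] [MulAction Γ X]
    (g : Γ) : ℝ :=
  ⨅ x : X, dist x (g • x)

/-- The asymptotic (stable) translation length `ℓ(g) = lim_n d(g^n • z0, z0)/n`;
by Fekete's subadditivity lemma the limit equals the infimum over `n ≥ 1`. -/
def stableLength {Γ X : Type*} [Group Γ] [MetricSpace X] [MulAction Γ X]
    (z0 : X) (g : Γ) : ℝ :=
  ⨅ n : ℕ, dist ((g ^ (n + 1)) • z0) z0 / (n + 1)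

/-- `B` is non-arithmetic: some power `B^n` contains two elements with different
asymptotic translation lengths. -/
def NonArithmetic {Γ X : Type*} [Group Γ] [MetricSpace X] [MulAction Γ X]
    (z0 : X) (B : Set Γ) : Prop :=
  ∃ (n : ℕ) (g₁ g₂ : Γ), g₁ ∈ B ^ n ∧ g₂ ∈ B ^ n ∧
    stableLength z0 g₁ ≠ stableLength z0 g₂

/-- `sup_{g ∈ B^n} d(g•z0, z0)`, valued in `[0,∞]`. -/
def dispSup {Γ X : Type*} [Group Γ] [MetricSpace X] [MulAction Γ X]
    (z0 : X) (B : Set Γ) (n : ℕ) : ENNReal :=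
  ⨆ g ∈ B ^ n, ENNReal.ofReal (dist (g • z0) z0)

/-- `inf_{g ∈ B^n} d(g•z0, z0)`, valued in `[0,∞]`. -/
def dispInf {Γ X : Type*} [Group Γ] [MetricSpace X] [MulAction Γ X]
    (z0 : X) (B : Set Γ) (n : ℕ) : ENNReal :=
  ⨅ g ∈ B ^ n, ENNReal.ofReal (dist (g • z0) z0)

/-- `μ` has a finite exponential moment:
`E[exp (λ·d(z0, ω 1 • z0))] < ∞` for some `λ > 0`. -/
def FiniteExpMoment {Γ Ω X : Type*} [Group Γ] [MetricSpace X] [MulAction Γ X]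
    [MeasurableSpace Ω] (P : Measure Ω) (ω : ℕ → Ω → Γ) (z0 : X) : Prop :=
  ∃ lam : ℝ, 0 < lam ∧
    Integrable (fun ρ => Real.exp (lam * dist ((ω 1 ρ) • z0) z0)) P

/-- The increments `ω i` are i.i.d. with common law `μ`. -/
def IIDWalk {Γ Ω : Type*} [Group Γ] [MeasurableSpace Γ] [MeasurableSpace Ω]
    (P : Measure Ω) (ω : ℕ → Ω → Γ) (μ : Measure Γ) : Prop :=
  (∀ i, Measurable (ω i)) ∧
  iIndepFun ω P ∧
  ∀ i, P.map (ω i) = μ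

/-- `-(1/n)·log P(d(z_n, z0) ≤ a·n)`. -/
def belowRate {Γ Ω X : Type*} [Group Γ] [MetricSpace X] [MulAction Γ X]
    [MeasurableSpace Ω] (P : Measure Ω) (ω : ℕ → Ω → Γ) (z0 : X) (a : ℝ) (n : ℕ) : EReal :=
  -((((n : ℝ)⁻¹ : ℝ) : EReal) * elog (P {ρ | dist ((walk ω n ρ) • z0) z0 ≤ a * n}))

/-- `-(1/n)·log P(d(z_n, z0) ≥ a·n)`. -/
def aboveRate {Γ Ω X : Type*} [Group Γ] [MetricSpace X] [MulAction Γ X]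
    [MeasurableSpace Ω] (P : Measure Ω) (ω : ℕ → Ω → Γ) (z0 : X) (a : ℝ) (n : ℕ) : EReal :=
  -((((n : ℝ)⁻¹ : ℝ) : EReal) * elog (P {ρ | a * n ≤ dist ((walk ω n ρ) • z0) z0}))

end BMS
namespace BMS

/-- Convolution of two measures on a group. -/
def mconv {Γ : Type*} [Monoid Γ] [MeasurableSpace Γ] (μ ν : Measure Γ) : Measure Γ :=
  (μ.prod ν).map fun p => p.1 * p.2

/-- `p`-fold convolution power `μ^{*p}` of a measure. -/
def convPow {Γ : Type*} [Monoid Γ] [MeasurableSpace Γ] (μ : Measure Γ) : ℕ → Measure Γ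
  | 0 => Measure.dirac 1
  | n + 1 => mconv (convPow μ n) μ

section Hyp

variable {X : Type*} [MetricSpace X]

lemma gp_symm (x y z : X) : gp x y z = gp x z y := by
  unfold gp; rw [dist_comm y z]; ring

lemma gp_nonneg (x y z : X) : 0 ≤ gp x y z := by
  unfold gp
  nlinarith [dist_triangle y x z, dist_comm x z]

lemma gp_self_right (x y : X) : gp x y y = dist x y := by
  unfold gp; rw [dist_self, dist_comm y x]; ring

lemma gp_right_self (x y : X) : gp x y x = 0 := by
  unfold gp; rw [dist_self]; ring

/-- `(z,y)ₓ + (z,x)_y = d(x,y)` -/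
lemma gp_sum (x y z : X) : gp x z y + gp y z x = dist x y := by
  unfold gp
  rw [dist_comm y x]
  ring

lemma dist_eq_add_sub_gp (x y z : X) :
    dist x z = dist x y + dist y z - 2 * gp y x z := by
  unfold gp; rw [dist_comm z y]; ring

lemma gp_le_add_base (x w y z : X) : gp x y z ≤ dist x w + gp w y z := by
  unfold gp
  nlinarith [dist_triangle y w x, dist_triangle z w x, dist_comm w x, dist_comm x w]

lemma gp_perturb (x y y' z : X) : gp x y z ≤ gp x y' z + dist y y' := by
  unfold gp
  nlinarith [dist_triangle y y' x, dist_triangle y' y z, dist_comm y y', dist_comm y' y]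

section Chain

variable {δ K : ℝ} {x : ℕ → X} {k : ℕ}

/-- key downward induction: alignment of a chain -/
lemma chain_Q (hδ : 0 < δ) (hyp : HypWith δ X) (hK : 0 ≤ K)
    (hH1 : ∀ i, i + 2 ≤ k → gp (x (i+1)) (x i) (x (i+2)) ≤ K)
    (hH2 : ∀ i, i + 1 ≤ k → 2*K + 4*δ + 1 ≤ dist (x i) (x (i+1))) :
    ∀ i, i + 2 ≤ k → gp (x (i+1)) (x i) (x k) ≤ K + δ := by
  have main : ∀ j i, i + 2 ≤ k → k ≤ i + 2 + j → gp (x (i+1)) (x i) (x k) ≤ K + δ := by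
    intro j
    induction j with
    | zero =>
      intro i h1 h2
      have hk : k = i + 2 := by omega
      subst hk
      exact le_trans (hH1 i h1) (by linarith)
    | succ j ih =>
      intro i h1 h2
      by_cases hc : k ≤ i + 2 + j
      · exact ih i h1 hc
      · have hk3 : i + 3 ≤ k := by omega
        have hprev : gp (x (i+2)) (x (i+1)) (x k) ≤ K + δ := by
          have := ih (i+1) (by omega) (by omega)
          simpa [show i+1+1 = i+2 by ring, show i+1+2 = i+3 by ring] using this
        have hsum := gp_sum (x (i+1)) (x (i+2)) (x k)
        have hd := hH2 (i+1) (by omega)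
        have hbig : K + 3*δ + 1 ≤ gp (x (i+1)) (x k) (x (i+2)) := by
          have hs : gp (x (i+2)) (x k) (x (i+1)) ≤ K + δ := by
            rw [gp_symm]; exact hprev
          have h2' : 2*K + 4*δ + 1 ≤ dist (x (i+1)) (x (i+2)) := by
            simpa [show i+1+1 = i+2 by ring] using hd
          linarith [hsum]
        by_contra hcon
        push_neg at hcon
        have hmin := hyp (x (i+1)) (x i) (x (i+2)) (x k)
        rw [gp_symm (x (i+1)) (x k) (x i)] at hmin
        have hminlb : K + δ < min (gp (x (i+1)) (x i) (x k)) (gp (x (i+1)) (x k) (x (i+2))) :=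
          lt_min hcon (lt_of_lt_of_le (by linarith) hbig)
        have hH := hH1 i h1
        linarith [hmin, hminlb]
  intro i h
  exact main (k - (i+2)) i h (by omega)

/-- the first step of a chain is aligned with the endpoint -/
lemma chain_C2 (hδ : 0 < δ) (hyp : HypWith δ X) (hK : 0 ≤ K)
    (hH1 : ∀ i, i + 2 ≤ k → gp (x (i+1)) (x i) (x (i+2)) ≤ K)
    (hH2 : ∀ i, i + 1 ≤ k → 2*K + 4*δ + 1 ≤ dist (x i) (x (i+1)))
    (hk : 1 ≤ k) :
    K + 3*δ + 1 ≤ gp (x 0) (x 1) (x k) := by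
  rcases Nat.lt_or_ge k 2 with h2 | h2
  · have hk1 : k = 1 := by omega
    subst hk1
    rw [gp_self_right]
    have := hH2 0 (by omega)
    linarith
  · have hq := chain_Q hδ hyp hK hH1 hH2 0 (by omega)
    have hsum := gp_sum (x 0) (x 1) (x k)
    have hd := hH2 0 (by omega)
    have : gp (x 1) (x k) (x 0) ≤ K + δ := by rw [gp_symm]; simpa using hq
    have hx : gp (x 0) (x k) (x 1) = gp (x 0) (x 1) (x k) := gp_symm _ _ _
    linarith [hsum, hx.symm.le, hx.le]

/-- two chains branching at a common origin have bounded Gromov product -/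
lemma chain_C4 (hδ : 0 < δ) (hyp : HypWith δ X) (hK : 0 ≤ K)
    {u v : ℕ → X} {k l : ℕ}
    (hu1 : ∀ i, i + 2 ≤ k → gp (u (i+1)) (u i) (u (i+2)) ≤ K)
    (hu2 : ∀ i, i + 1 ≤ k → 2*K + 4*δ + 1 ≤ dist (u i) (u (i+1)))
    (hv1 : ∀ i, i + 2 ≤ l → gp (v (i+1)) (v i) (v (i+2)) ≤ K)
    (hv2 : ∀ i, i + 1 ≤ l → 2*K + 4*δ + 1 ≤ dist (v i) (v (i+1)))
    (hk : 1 ≤ k) (hl : 1 ≤ l) (h0 : u 0 = v 0)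
    (hbr : gp (u 0) (u 1) (v 1) ≤ K) :
    gp (u 0) (u k) (v l) ≤ K + 2*δ := by
  by_contra hcon
  push_neg at hcon
  have hcu : K + 3*δ + 1 ≤ gp (u 0) (u 1) (u k) := chain_C2 hδ hyp hK hu1 hu2 hk
  have hcv : K + 3*δ + 1 ≤ gp (u 0) (v 1) (v l) := by
    rw [h0]; exact chain_C2 hδ hyp hK hv1 hv2 hl
  -- step 1 : gp (u 0) (u 1) (v l) > K + δ
  have hmin1 := hyp (u 0) (u 1) (v l) (u k)
  have e1 : gp (u 0) (u k) (u 1) = gp (u 0) (u 1) (u k) := gp_symm _ _ _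
  rw [e1] at hmin1
  have hs1 : K + δ < gp (u 0) (u 1) (v l) := by
    have : K + 2*δ < min (gp (u 0) (u 1) (u k)) (gp (u 0) (u k) (v l)) :=
      lt_min (by linarith) hcon
    linarith [hmin1]
  -- step 2 : contradiction
  have hmin2 := hyp (u 0) (u 1) (v 1) (v l)
  have e2 : gp (u 0) (v l) (u 1) = gp (u 0) (u 1) (v l) := gp_symm _ _ _
  have e3 : gp (u 0) (v l) (v 1) = gp (u 0) (v 1) (v l) := gp_symm _ _ _
  rw [e2, e3] at hmin2
  have : K < min (gp (u 0) (u 1) (v l)) (gp (u 0) (v 1) (v l)) - δ := by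
    have := lt_min hs1 (show K + δ < gp (u 0) (v 1) (v l) by linarith)
    linarith
  linarith [hmin2, hbr]

/-- interior points of a chain: the endpoints are on opposite sides -/
lemma gp_self_left (x y : X) : gp x x y = 0 := by
  unfold gp; rw [dist_self, dist_comm y x]; ring

lemma chain_mid (hδ : 0 < δ) (hyp : HypWith δ X) (hK : 0 ≤ K)
    (hH1 : ∀ i, i + 2 ≤ k → gp (x (i+1)) (x i) (x (i+2)) ≤ K)
    (hH2 : ∀ i, i + 1 ≤ k → 2*K + 4*δ + 1 ≤ dist (x i) (x (i+1)))
    {j : ℕ} (hj1 : 1 ≤ j) (hjk : j ≤ k) :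
    gp (x j) (x 0) (x k) ≤ K + 2*δ := by
  rcases eq_or_lt_of_le hjk with hje | hjlt
  · subst hje
    rw [gp_symm, gp_self_left]
    linarith
  · have key := chain_C4 hδ hyp hK (u := fun i => x (j - i)) (v := fun i => x (j + i))
      (k := j) (l := k - j)
      (fun i hi => by
        have e1 : j - (i+1) = j-i-2+1 := by omega
        have e2 : j - i = j-i-2+2 := by omega
        have e3 : j - (i+2) = j-i-2 := by omega
        rw [e1, e3, e2, gp_symm]
        exact hH1 (j-i-2) (by omega))
      (fun i hi => by
        have e1 : j - i = j-i-1+1 := by omega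
        have e2 : j - (i+1) = j-i-1 := by omega
        rw [e2, e1, dist_comm]
        exact hH2 (j-i-1) (by omega))
      (fun i hi => by
        have e0 : j + (i+1) = (j+i) + 1 := by ring
        have e1 : j + (i+2) = (j+i) + 2 := by ring
        rw [e0, e1]
        exact hH1 (j + i) (by omega))
      (fun i hi => by
        have e0 : j + (i+1) = (j+i) + 1 := by ring
        rw [e0]
        exact hH2 (j + i) (by omega))
      hj1 (by omega) (by simp)
      (by
        have e1 : j - 0 = (j-1)+1 := by omega
        have e2 : j - 1 = j - 1 := rfl
        have e3 : j + 1 = (j-1) + 2 := by omega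
        rw [e1, e3]
        exact hH1 (j-1) (by omega))
    have e1 : j - 0 = j := by omega
    have e2 : j - j = 0 := by omega
    have e3 : j + (k - j) = k := by omega
    rw [e1, e2, e3] at key
    exact key

lemma chain_lower (hδ : 0 < δ) (hyp : HypWith δ X) (hK : 0 ≤ K)
    (hH1 : ∀ i, i + 2 ≤ k → gp (x (i+1)) (x i) (x (i+2)) ≤ K)
    (hH2 : ∀ i, i + 1 ≤ k → 2*K + 4*δ + 1 ≤ dist (x i) (x (i+1)))
    {j : ℕ} (hj1 : 1 ≤ j) (hjk : j ≤ k) :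
    dist (x 0) (x j) - (K + 2*δ) ≤ gp (x 0) (x j) (x k) := by
  have hsum := gp_sum (x 0) (x j) (x k)
  have hmid := chain_mid hδ hyp hK hH1 hH2 hj1 hjk
  have e1 : gp (x 0) (x k) (x j) = gp (x 0) (x j) (x k) := gp_symm _ _ _
  have e2 : gp (x j) (x k) (x 0) = gp (x j) (x 0) (x k) := gp_symm _ _ _
  linarith [hsum, e1.le, e1.symm.le]

lemma chain_dist (hδ : 0 < δ) (hyp : HypWith δ X) (hK : 0 ≤ K) :
    ∀ (k : ℕ) (x : ℕ → X),
    (∀ i, i + 2 ≤ k → gp (x (i+1)) (x i) (x (i+2)) ≤ K) →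
    (∀ i, i + 1 ≤ k → 2*K + 4*δ + 1 ≤ dist (x i) (x (i+1))) →
    (2*δ+1) * k ≤ dist (x 0) (x k) := by
  intro k
  induction k with
  | zero => intro x _ _; simp [dist_nonneg]
  | succ k ih =>
    intro x hH1 hH2
    rcases Nat.eq_zero_or_pos k with hk0 | hkpos
    · subst hk0
      have := hH2 0 (by omega)
      push_cast
      linarith
    · have ihs := ih (fun i => x (i+1))
        (fun i hi => by
          have h := hH1 (i+1) (by omega)
          simpa [show i+1+1 = i+2 by ring, show i+1+2 = i+3 by ring] using h)
        (fun i hi => by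
          have h := hH2 (i+1) (by omega)
          simpa [show i+1+1 = i+2 by ring] using h)
      have hq : gp (x 1) (x 0) (x (k+1)) ≤ K + δ :=
        chain_Q hδ hyp hK hH1 hH2 0 (by omega)
      have hdd := dist_eq_add_sub_gp (x 0) (x 1) (x (k+1))
      have hd0 := hH2 0 (by omega)
      have : (2*δ+1) * k ≤ dist (x 1) (x (k+1)) := by simpa using ihs
      push_cast
      nlinarith

end Chain
end Hyp

section Act

variable {X : Type*} [MetricSpace X] {Γ : Type*} [Group Γ] [MulAction Γ X]

lemma gp_smul (hiso : IsIsomAction Γ X) (g : Γ) (x y z : X) :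
    gp (g • x) (g • y) (g • z) = gp x y z := by
  unfold gp; rw [hiso g y x, hiso g z x, hiso g y z]

lemma dist_smul_inv (hiso : IsIsomAction Γ X) (g : Γ) (z0 : X) :
    dist z0 (g⁻¹ • z0) = dist z0 (g • z0) := by
  have := hiso g z0 (g⁻¹ • z0)
  rw [smul_inv_smul] at this
  rw [← this, dist_comm]

variable {δ : ℝ} {z0 : X}

/-- transfer of an upper Gromov product bound to a farther point on an aligned ray -/
lemma far_transfer (hδ : 0 < δ) (hyp : HypWith δ X) {T c' : ℝ} {p q r : X}
    (h1 : gp z0 p q ≤ T) (h2 : dist z0 q - c' ≤ gp z0 q r)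
    (h3 : T + c' + δ < dist z0 q) : gp z0 p r ≤ T + δ := by
  by_contra hcon
  push_neg at hcon
  have hmin := hyp z0 p q r
  have e1 : gp z0 r p = gp z0 p r := gp_symm _ _ _
  have e2 : gp z0 r q = gp z0 q r := gp_symm _ _ _
  rw [e1, e2] at hmin
  have : T < min (gp z0 p r) (gp z0 q r) - δ := by
    have := lt_min hcon (show T + δ < gp z0 q r by linarith)
    linarith
  linarith

section Letter

variable {K₀ : ℝ} {g : Γ}

/-- the orbit of a power chain satisfies the chain hypotheses -/
lemma pow_chain_H1 (hiso : IsIsomAction Γ X)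
    (hg1 : gp z0 (g⁻¹ • z0) (g • z0) ≤ K₀) (i : ℕ) :
    gp ((g^(i+1)) • z0) ((g^i) • z0) ((g^(i+2)) • z0) ≤ K₀ := by
  have e1 : (g^i) • z0 = (g^(i+1)) • (g⁻¹ • z0) := by
    rw [smul_smul]
    congr 1
    rw [pow_succ, mul_assoc, mul_inv_cancel, mul_one]
  have e2 : (g^(i+2)) • z0 = (g^(i+1)) • (g • z0) := by
    rw [smul_smul, ← pow_succ]
  rw [e1, e2]
  have e3 : (g^(i+1)) • z0 = (g^(i+1)) • z0 := rfl
  calc gp ((g^(i+1)) • z0) ((g^(i+1)) • (g⁻¹ • z0)) ((g^(i+1)) • (g • z0))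
      = gp z0 (g⁻¹ • z0) (g • z0) := gp_smul hiso _ _ _ _
    _ ≤ K₀ := hg1

lemma pow_chain_H2 (hiso : IsIsomAction Γ X) {J : ℝ}
    (hg2 : J ≤ dist z0 (g • z0)) (i : ℕ) :
    J ≤ dist ((g^i) • z0) ((g^(i+1)) • z0) := by
  have e2 : (g^(i+1)) • z0 = (g^i) • (g • z0) := by rw [smul_smul, ← pow_succ]
  rw [e2]
  have : dist ((g^i) • z0) ((g^i) • (g • z0)) = dist z0 (g • z0) := hiso _ _ _
  rw [this]
  exact hg2

lemma inv_letter_gp (hiso : IsIsomAction Γ X)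
    (hg1 : gp z0 (g⁻¹ • z0) (g • z0) ≤ K₀) :
    gp z0 ((g⁻¹)⁻¹ • z0) (g⁻¹ • z0) ≤ K₀ := by
  rw [inv_inv, gp_symm]; exact hg1

/-- F1 : separation of the two ends of the orbit of a single element -/
lemma lox_sep (hδ : 0 < δ) (hyp : HypWith δ X) (hiso : IsIsomAction Γ X) (hK : 0 ≤ K₀)
    (hg1 : gp z0 (g⁻¹ • z0) (g • z0) ≤ K₀)
    (hg2 : 2*K₀ + 4*δ + 1 ≤ dist z0 (g • z0))
    {j k : ℕ} (hj : 1 ≤ j) (hk : 1 ≤ k) :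
    gp z0 ((g⁻¹)^j • z0) ((g^k) • z0) ≤ K₀ + 2*δ := by
  have hg2' : 2*K₀ + 4*δ + 1 ≤ dist z0 (g⁻¹ • z0) := by
    rw [dist_smul_inv hiso]; exact hg2
  have key := chain_C4 hδ hyp hK (u := fun i => ((g⁻¹)^i) • z0) (v := fun i => (g^i) • z0)
    (k := j) (l := k)
    (fun i _ => pow_chain_H1 hiso (inv_letter_gp hiso hg1) i)
    (fun i _ => pow_chain_H2 hiso hg2' i)
    (fun i _ => pow_chain_H1 hiso hg1 i)
    (fun i _ => pow_chain_H2 hiso hg2 i)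
    hj hk (by simp)
    (by
      simp only [pow_zero, one_smul, pow_one]
      first
        | exact hg1
        | (rw [gp_symm]; exact hg1))
  simpa using key

/-- F2 : alignment along the positive ray -/
lemma lox_lower (hδ : 0 < δ) (hyp : HypWith δ X) (hiso : IsIsomAction Γ X) (hK : 0 ≤ K₀)
    (hg1 : gp z0 (g⁻¹ • z0) (g • z0) ≤ K₀)
    (hg2 : 2*K₀ + 4*δ + 1 ≤ dist z0 (g • z0))
    {j k : ℕ} (hj : 1 ≤ j) (hjk : j ≤ k) :
    dist z0 ((g^j) • z0) - (K₀ + 2*δ) ≤ gp z0 ((g^j) • z0) ((g^k) • z0) := by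
  have key := chain_lower (x := fun i => (g^i) • z0) (k := k) hδ hyp hK
    (fun i _ => pow_chain_H1 hiso hg1 i)
    (fun i _ => pow_chain_H2 hiso hg2 i)
    hj hjk
  simpa using key

end Letter

/-- quasi-geodesic bounds at the basepoint, for a loxodromic element -/
lemma lox_bounds (hiso : IsIsomAction Γ X) {a : Γ} (ha : IsLoxodromic X a) :
    ∃ lam c : ℝ, 1 ≤ lam ∧ 0 ≤ c ∧ ∀ k : ℕ,
      (k : ℝ)/lam - c ≤ dist z0 ((a^k) • z0) ∧ dist z0 ((a^k) • z0) ≤ lam * k + c := by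
  obtain ⟨x, lam, C, hlam, hC, hQ⟩ := ha
  refine ⟨lam, C + 2 * dist x z0, hlam, by positivity, fun k => ?_⟩
  have h := hQ (k : ℤ) 0
  simp only [zpow_natCast, zpow_zero, one_smul, Int.cast_zero, sub_zero] at h
  rw [dist_comm ((a^k) • x) x] at h
  have habs : |((k:ℤ):ℝ)| = (k:ℝ) := by
    push_cast
    exact abs_of_nonneg (by positivity)
  rw [habs] at h
  have htri1 : dist z0 ((a^k) • z0) ≤ dist x ((a^k) • x) + 2 * dist x z0 := by
    have t1 := dist_triangle z0 x ((a^k) • z0)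
    have t2 := dist_triangle x ((a^k) • x) ((a^k) • z0)
    have : dist ((a^k) • x) ((a^k) • z0) = dist x z0 := hiso _ _ _
    rw [this] at t2
    rw [dist_comm z0 x] at t1
    linarith
  have htri2 : dist x ((a^k) • x) - 2 * dist x z0 ≤ dist z0 ((a^k) • z0) := by
    have t1 := dist_triangle x z0 ((a^k) • x)
    have t2 := dist_triangle z0 ((a^k) • z0) ((a^k) • x)
    have : dist ((a^k) • z0) ((a^k) • x) = dist z0 x := hiso _ _ _
    rw [this] at t2
    rw [dist_comm z0 x] at t2
    linarith
  constructor
  · have hl : (k:ℝ)/lam ≤ lam⁻¹ * k := by rw [inv_mul_eq_div]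
    linarith [h.1]
  · linarith [h.2]

/-- extraction of a "frequently bounded" diagonal sequence from the failure of SameEnd -/
lemma not_sameEnd_freq {u v : ℕ → X} (h : ¬ SameEnd z0 u v) :
    ∃ M : ℝ, 0 ≤ M ∧ ∀ N : ℕ, ∃ n, N ≤ n ∧ gp z0 (u n) (v n) ≤ M := by
  unfold SameEnd at h
  rw [Filter.tendsto_atTop_atTop] at h
  push_neg at h
  obtain ⟨b, hb⟩ := h
  refine ⟨max b 0, le_max_right _ _, fun N => ?_⟩
  obtain ⟨n, hn, hlt⟩ := hb N
  exact ⟨n, hn, le_trans hlt.le (le_max_left _ _)⟩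

end Act

section Transfer

variable {X : Type*} [MetricSpace X] {Γ : Type*} [Group Γ] [MulAction Γ X]
variable {δ : ℝ} {z0 : X}

/-- lower bound for the Gromov product of an intermediate orbit point with a far
multiple-orbit point -/
lemma ray_lower_general (hδ : 0 < δ) (hyp : HypWith δ X) (hiso : IsIsomAction Γ X)
    {g : Γ} {ng : ℕ} (hng : 1 ≤ ng) {Mg lg cg : ℝ} (hMg : 0 ≤ Mg)
    (hg1 : gp z0 ((g^ng)⁻¹ • z0) ((g^ng) • z0) ≤ Mg)
    (hg2 : 2*Mg + 4*δ + 1 ≤ dist z0 ((g^ng) • z0))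
    (hlg : 1 ≤ lg) (hcg : 0 ≤ cg)
    (hQg : ∀ k : ℕ, dist z0 ((g^k) • z0) ≤ lg*k + cg)
    {n r : ℕ} (hn1 : ng ≤ n) (hn2 : n ≤ ng*r) :
    dist z0 ((g^n) • z0) - (Mg + 2*δ + 2*(lg*ng+cg)) ≤ gp z0 ((g^n) • z0) ((g^(ng*r)) • z0) := by
  set j := n / ng with hj
  have hng0 : 0 < ng := hng
  have hj1 : 1 ≤ j := (Nat.one_le_div_iff hng0).2 hn1
  have hjr : j ≤ r := by
    have h1 : n / ng ≤ (ng * r) / ng := Nat.div_le_div_right hn2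
    rwa [Nat.mul_div_cancel_left r hng0] at h1
  have hlow := lox_lower hδ hyp hiso hMg hg1 hg2 hj1 hjr
  have epow : ∀ m : ℕ, (g^ng)^m = g^(ng*m) := fun m => (pow_mul g ng m).symm
  rw [epow j, epow r] at hlow
  have hle : ng * j ≤ n := by rw [hj]; exact Nat.mul_div_le n ng
  have hmod : n - ng*j < ng := by
    rw [hj]
    have hdm := Nat.div_add_mod n ng
    have hml := Nat.mod_lt n hng0
    omega
  have edist : dist ((g^(ng*j)) • z0) ((g^n) • z0) = dist z0 ((g^(n - ng*j)) • z0) := by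
    have : (g^(ng*j)) • ((g^(n - ng*j)) • z0) = (g^n) • z0 := by
      rw [smul_smul, ← pow_add]
      congr 2
      omega
    rw [← this]
    exact hiso _ _ _
  have he : dist ((g^(ng*j)) • z0) ((g^n) • z0) ≤ lg*ng + cg := by
    rw [edist]
    calc dist z0 ((g^(n - ng*j)) • z0) ≤ lg*((n - ng*j : ℕ) : ℝ) + cg := hQg _
      _ ≤ lg*ng + cg := by
        have hcast : ((n - ng*j : ℕ) : ℝ) ≤ (ng : ℝ) := by exact_mod_cast hmod.le
        nlinarith
  have hpert := gp_perturb z0 ((g^(ng*j)) • z0) ((g^n) • z0) ((g^(ng*r)) • z0)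
  have htri : dist z0 ((g^(ng*j)) • z0) ≥ dist z0 ((g^n) • z0) - dist ((g^(ng*j)) • z0) ((g^n) • z0) := by
    have := dist_triangle z0 ((g^(ng*j)) • z0) ((g^n) • z0)
    linarith [dist_comm ((g^(ng*j)) • z0) ((g^n) • z0)]
  linarith [hlow, hpert, he, htri]

/-- main transfer lemma: from a frequently bounded diagonal product to a bound on
products of large multiples -/
lemma transfer (hδ : 0 < δ) (hyp : HypWith δ X) (hiso : IsIsomAction Γ X)
    {c d : Γ} {nc nd : ℕ} (hnc : 1 ≤ nc) (hnd : 1 ≤ nd)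
    {Mc Md M₀ : ℝ} (hMc0 : 0 ≤ Mc) (hMd0 : 0 ≤ Md) (hM0 : 0 ≤ M₀)
    (hc1 : gp z0 ((c^nc)⁻¹ • z0) ((c^nc) • z0) ≤ Mc)
    (hc2 : 2*Mc + 4*δ + 1 ≤ dist z0 ((c^nc) • z0))
    (hd1 : gp z0 ((d^nd)⁻¹ • z0) ((d^nd) • z0) ≤ Md)
    (hd2 : 2*Md + 4*δ + 1 ≤ dist z0 ((d^nd) • z0))
    {lc cc ld cd : ℝ} (hlc : 1 ≤ lc) (hcc : 0 ≤ cc) (hld : 1 ≤ ld) (hcd0 : 0 ≤ cd)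
    (hQc : ∀ k : ℕ, (k : ℝ)/lc - cc ≤ dist z0 ((c^k) • z0) ∧ dist z0 ((c^k) • z0) ≤ lc*k + cc)
    (hQd : ∀ k : ℕ, (k : ℝ)/ld - cd ≤ dist z0 ((d^k) • z0) ∧ dist z0 ((d^k) • z0) ≤ ld*k + cd)
    (hfreq : ∀ N : ℕ, ∃ n, N ≤ n ∧ gp z0 ((c^n) • z0) ((d^n) • z0) ≤ M₀) :
    ∃ N₀ : ℕ, 1 ≤ N₀ ∧ ∀ s r : ℕ, N₀ ≤ s → N₀ ≤ r →
      gp z0 ((c^(nc*s)) • z0) ((d^(nd*r)) • z0) ≤ M₀ + 2*δ := by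
  set ca := Mc + 2*δ + 2*(lc*nc+cc) with hca
  set cb := Md + 2*δ + 2*(ld*nd+cd) with hcb
  obtain ⟨n, hnN, hgp⟩ := hfreq (max (max nc nd)
    (max (⌈ld*(M₀+cb+δ+cd+1)⌉₊) (⌈lc*(M₀+ca+2*δ+cc+1)⌉₊)))
  refine ⟨n, le_trans hnc (le_trans (le_max_left _ _) (le_trans (le_max_left _ _) hnN)), ?_⟩
  intro s r hs hr
  have hnnc : nc ≤ n := le_trans (le_max_left _ _) (le_trans (le_max_left _ _) hnN)
  have hnnd : nd ≤ n := le_trans (le_max_right _ _) (le_trans (le_max_left _ _) hnN)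
  have hdn_big : M₀ + cb + δ < dist z0 ((d^n) • z0) := by
    have h1 := (hQd n).1
    have h2 : ld*(M₀+cb+δ+cd+1) ≤ (n : ℝ) := by
      have : (⌈ld*(M₀+cb+δ+cd+1)⌉₊ : ℕ) ≤ n :=
        le_trans (le_max_left _ _) (le_trans (le_max_right _ _) hnN)
      calc ld*(M₀+cb+δ+cd+1) ≤ (⌈ld*(M₀+cb+δ+cd+1)⌉₊ : ℝ) := Nat.le_ceil _
        _ ≤ (n : ℝ) := by exact_mod_cast this
    have hld0 : 0 < ld := by linarith
    have : M₀+cb+δ+cd+1 ≤ (n : ℝ)/ld := by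
      rw [le_div_iff₀ hld0]
      linarith [mul_comm ld (M₀+cb+δ+cd+1)]
    have hcb0 : 0 ≤ cb := by
      have : (0:ℝ) ≤ (nd:ℝ) := Nat.cast_nonneg _
      nlinarith
    linarith
  have hcn_big : (M₀ + δ) + ca + δ < dist z0 ((c^n) • z0) := by
    have h1 := (hQc n).1
    have h2 : lc*(M₀+ca+2*δ+cc+1) ≤ (n : ℝ) := by
      have : (⌈lc*(M₀+ca+2*δ+cc+1)⌉₊ : ℕ) ≤ n :=
        le_trans (le_max_right _ _) (le_trans (le_max_right _ _) hnN)
      calc lc*(M₀+ca+2*δ+cc+1) ≤ (⌈lc*(M₀+ca+2*δ+cc+1)⌉₊ : ℝ) := Nat.le_ceil _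
        _ ≤ (n : ℝ) := by exact_mod_cast this
    have hlc0 : 0 < lc := by linarith
    have : M₀+ca+2*δ+cc+1 ≤ (n : ℝ)/lc := by
      rw [le_div_iff₀ hlc0]
      linarith [mul_comm lc (M₀+ca+2*δ+cc+1)]
    linarith
  -- step 1 : transfer along the d-ray
  have hstep1 : gp z0 ((c^n) • z0) ((d^(nd*r)) • z0) ≤ M₀ + δ := by
    apply far_transfer hδ hyp hgp (c' := cb)
    · exact ray_lower_general hδ hyp hiso hnd hMd0 hd1 hd2 hld hcd0
        (fun k => (hQd k).2) hnnd (le_trans hr (Nat.le_mul_of_pos_left r hnd))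
    · exact hdn_big
  -- step 2 : transfer along the c-ray
  have hstep2 : gp z0 ((d^(nd*r)) • z0) ((c^(nc*s)) • z0) ≤ (M₀ + δ) + δ := by
    apply far_transfer hδ hyp (T := M₀ + δ) (c' := ca)
    · rw [gp_symm]; exact hstep1
    · exact ray_lower_general hδ hyp hiso hnc hMc0 hc1 hc2 hlc hcc
        (fun k => (hQc k).2) hnnc (le_trans hs (Nat.le_mul_of_pos_left s hnc))
    · exact hcn_big
  calc gp z0 ((c^(nc*s)) • z0) ((d^(nd*r)) • z0)
      = gp z0 ((d^(nd*r)) • z0) ((c^(nc*s)) • z0) := gp_symm _ _ _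
    _ ≤ M₀ + 2*δ := by linarith

end Transfer

section Words

variable {Γ : Type*} [Group Γ]

/-- partial products of a sequence of letters -/
def wpp (c : ℕ → Γ) : ℕ → Γ
  | 0 => 1
  | s+1 => wpp c s * c s

@[simp] lemma wpp_zero (c : ℕ → Γ) : wpp c 0 = 1 := rfl

lemma wpp_succ (c : ℕ → Γ) (s : ℕ) : wpp c (s+1) = wpp c s * c s := rfl

lemma wpp_congr {c c' : ℕ → Γ} {m : ℕ} (h : ∀ s, s < m → c s = c' s) :
    ∀ s, s ≤ m → wpp c s = wpp c' s := by
  intro s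
  induction s with
  | zero => intro; rfl
  | succ s ih =>
    intro hs
    rw [wpp_succ, wpp_succ, ih (by omega), h s (by omega)]

lemma wpp_rev (c : ℕ → Γ) (m : ℕ) :
    wpp (fun s => (c (m-1-s))⁻¹) m = (wpp c m)⁻¹ := by
  have key : ∀ j, j ≤ m → wpp (fun s => (c (m-1-s))⁻¹) j = (wpp c m)⁻¹ * wpp c (m-j) := by
    intro j
    induction j with
    | zero => simp
    | succ j ih =>
      intro hj
      rw [wpp_succ, ih (by omega)]
      have e1 : m - j = (m-1-j) + 1 := by omega
      have e2 : m - (j+1) = m-1-j := by omega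
      rw [e1, e2, wpp_succ, mul_assoc, mul_assoc]
      simp
  have := key m (le_refl m)
  simpa using this

lemma wpp_mem_pow {B : Set Γ} {P : ℕ} {c : ℕ → Γ} :
    ∀ m : ℕ, (∀ s, s < m → c s ∈ B ^ P) → wpp c m ∈ B ^ (m * P) := by
  intro m
  induction m with
  | zero => intro _; simp [wpp_zero]
  | succ m ih =>
    intro h
    rw [wpp_succ, show (m+1)*P = m*P + P by ring, pow_add]
    exact Set.mul_mem_mul (ih (fun s hs => h s (by omega))) (h m (by omega))

lemma exists_pow_of_mem_closure {B : Set Γ} {a : Γ} (h : a ∈ Subsemigroup.closure B) :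
    ∃ k, 1 ≤ k ∧ a ∈ B ^ k := by
  have hle : Subsemigroup.closure B ≤
      ⟨{x | ∃ k, 1 ≤ k ∧ x ∈ B ^ k}, by
        rintro x y ⟨k1, hk1, hx⟩ ⟨k2, hk2, hy⟩
        exact ⟨k1 + k2, by omega, by rw [pow_add]; exact Set.mul_mem_mul hx hy⟩⟩ := by
    rw [Subsemigroup.closure_le]
    intro x hx
    exact ⟨1, le_refl 1, by rwa [pow_one]⟩
  exact hle h

end Words

section WordChains

variable {X : Type*} [MetricSpace X] {Γ : Type*} [Group Γ] [MulAction Γ X]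
variable {δ : ℝ} {z0 : X} {K Jm : ℝ}

variable {E : Bool → Γ}

lemma word_H1 (hiso : IsIsomAction Γ X) {c : ℕ → Γ} {m : ℕ}
    (hlet : ∀ s, s + 2 ≤ m → gp z0 ((c s)⁻¹ • z0) ((c (s+1)) • z0) ≤ K) :
    ∀ i, i + 2 ≤ m → gp ((wpp c (i+1)) • z0) ((wpp c i) • z0) ((wpp c (i+2)) • z0) ≤ K := by
  intro i hi
  have e1 : (wpp c i) • z0 = (wpp c (i+1)) • ((c i)⁻¹ • z0) := by
    rw [smul_smul, wpp_succ, mul_inv_cancel_right]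
  have e2 : (wpp c (i+2)) • z0 = (wpp c (i+1)) • ((c (i+1)) • z0) := by
    rw [smul_smul, ← wpp_succ]
  rw [e1, e2, gp_smul hiso]
  exact hlet i hi

lemma word_H2 (hiso : IsIsomAction Γ X) {c : ℕ → Γ} {m : ℕ} {J : ℝ}
    (hlet : ∀ s, s + 1 ≤ m → J ≤ dist z0 ((c s) • z0)) :
    ∀ i, i + 1 ≤ m → J ≤ dist ((wpp c i) • z0) ((wpp c (i+1)) • z0) := by
  intro i hi
  have e2 : (wpp c (i+1)) • z0 = (wpp c i) • ((c i) • z0) := by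
    rw [smul_smul, ← wpp_succ]
  rw [e2, hiso]
  exact hlet i hi

/-- distance from base point to a prefix point -/
lemma word_prefix_dist (hiso : IsIsomAction Γ X) {c : ℕ → Γ}
    (hlet : ∀ s, dist z0 ((c s) • z0) ≤ Jm) :
    ∀ r : ℕ, dist z0 ((wpp c r) • z0) ≤ r * Jm := by
  intro r
  induction r with
  | zero => simp
  | succ r ih =>
    have e2 : (wpp c (r+1)) • z0 = (wpp c r) • ((c r) • z0) := by
      rw [smul_smul, ← wpp_succ]
    have htri := dist_triangle z0 ((wpp c r) • z0) ((wpp c (r+1)) • z0)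
    have : dist ((wpp c r) • z0) ((wpp c (r+1)) • z0) = dist z0 ((c r) • z0) := by
      rw [e2, hiso]
    rw [this] at htri
    have := hlet r
    push_cast
    nlinarith [ih]

section Estimates

variable (hδ : 0 < δ) (hyp : HypWith δ X) (hiso : IsIsomAction Γ X) (hK : 0 ≤ K)
  (hEE : ∀ p q : Bool, gp z0 ((E p)⁻¹ • z0) ((E q) • z0) ≤ K)
  (hbr : gp z0 ((E true) • z0) ((E false) • z0) ≤ K)
  (hE2 : ∀ p, 2*K + 4*δ + 1 ≤ dist z0 ((E p) • z0))
  (hE3 : ∀ p, dist z0 ((E p) • z0) ≤ Jm)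

include hδ hyp hiso hK hEE hE2

lemma word_dist (β : ℕ → Bool) (m : ℕ) :
    (2*δ+1) * m ≤ dist z0 ((wpp (fun s => E (β s)) m) • z0) := by
  have h := chain_dist hδ hyp hK m (fun i => (wpp (fun s => E (β s)) i) • z0)
    (word_H1 hiso (fun s _ => hEE (β s) (β (s+1))))
    (word_H2 hiso (fun s _ => hE2 (β s)))
  simpa using h

include hbr hE3 in
lemma word_div {β γ : ℕ → Bool} {m r : ℕ} (hr : r + 1 ≤ m)
    (hagree : ∀ s, s < r → β s = γ s) (hdiff : β r ≠ γ r) :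
    gp z0 ((wpp (fun s => E (β s)) m) • z0) ((wpp (fun s => E (γ s)) m) • z0)
      ≤ r * Jm + (K + 2*δ) := by
  set cb := fun s => E (β s) with hcb
  set cg := fun s => E (γ s) with hcg
  have hpre : ∀ s, s ≤ r → wpp cb s = wpp cg s :=
    wpp_congr (fun s hs => by rw [hcb, hcg]; simp only; rw [hagree s hs])
  have key := chain_C4 hδ hyp hK
    (u := fun i => (wpp cb (r+i)) • z0) (v := fun i => (wpp cg (r+i)) • z0)
    (k := m - r) (l := m - r)
    (fun i hi => by
      have h := word_H1 (m := m) hiso (fun s _ => hEE (β s) (β (s+1))) (r+i) (by omega)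
      simpa [show r+i+1 = r+(i+1) by ring, show r+i+2 = r+(i+2) by ring] using h)
    (fun i hi => by
      have h := word_H2 (m := m) (J := 2*K+4*δ+1) hiso (fun s _ => hE2 (β s)) (r+i) (by omega)
      simpa [show r+i+1 = r+(i+1) by ring] using h)
    (fun i hi => by
      have h := word_H1 (m := m) hiso (fun s _ => hEE (γ s) (γ (s+1))) (r+i) (by omega)
      simpa [show r+i+1 = r+(i+1) by ring, show r+i+2 = r+(i+2) by ring] using h)
    (fun i hi => by
      have h := word_H2 (m := m) (J := 2*K+4*δ+1) hiso (fun s _ => hE2 (γ s)) (r+i) (by omega)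
      simpa [show r+i+1 = r+(i+1) by ring] using h)
    (by omega) (by omega)
    (by simp only [add_zero]; rw [hpre r (le_refl r)])
    (by
      have e1 : (wpp cb (r+1)) • z0 = (wpp cb r) • ((cb r) • z0) := by
        rw [smul_smul, ← wpp_succ]
      have e2 : (wpp cg (r+1)) • z0 = (wpp cb r) • ((cg r) • z0) := by
        rw [smul_smul, wpp_succ, ← hpre r (le_refl r)]
      simp only [add_zero]
      rw [e1, e2, gp_smul hiso]
      rcases Bool.eq_false_or_eq_true (β r) with hb | hb
        <;> rcases Bool.eq_false_or_eq_true (γ r) with hg | hg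
        <;> rw [hcb, hcg] <;> simp only <;> rw [hb, hg] <;>
        first
          | exact absurd (hb.trans hg.symm) hdiff
          | exact hbr
          | (rw [gp_symm]; exact hbr))
  have e3 : r + (m - r) = m := by omega
  have key2 : gp ((wpp cb r) • z0) ((wpp cb m) • z0) ((wpp cg m) • z0) ≤ K + 2*δ := by
    simpa only [e3, Nat.add_zero] using key
  calc gp z0 ((wpp cb m) • z0) ((wpp cg m) • z0)
      ≤ dist z0 ((wpp cb r) • z0) + gp ((wpp cb r) • z0) ((wpp cb m) • z0) ((wpp cg m) • z0) :=
        gp_le_add_base _ _ _ _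
    _ ≤ r * Jm + (K + 2*δ) := by
        have hd := word_prefix_dist hiso (fun s => hE3 (β s)) r
        exact add_le_add hd key2

end Estimates
end WordChains

section MeasPart

variable {Γ : Type*} [Group Γ] [Countable Γ] [MeasurableSpace Γ] [MeasurableSingletonClass Γ]

lemma meas_all (s : Set Γ) : MeasurableSet s := (Set.to_countable s).measurableSet

lemma measurable_mul2 : Measurable (fun p : Γ × Γ => p.1 * p.2) := by
  intro s _
  have : (fun p : Γ × Γ => p.1 * p.2) ⁻¹' s
      = ⋃ x : Γ, ({x} : Set Γ) ×ˢ ((fun y => x * y) ⁻¹' s) := by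
    ext ⟨p1, p2⟩
    simp [Set.mem_iUnion]
  rw [this]
  exact MeasurableSet.iUnion (fun x => (meas_all _).prod (meas_all _))

lemma convPow_isProb (μ : Measure Γ) [IsProbabilityMeasure μ] :
    ∀ n, IsProbabilityMeasure (convPow μ n)
  | 0 => by unfold convPow; infer_instance
  | n+1 => by
      haveI := convPow_isProb μ n
      unfold convPow mconv
      exact Measure.isProbabilityMeasure_map measurable_mul2.aemeasurable

lemma supp_convPow (μ : Measure Γ) [IsProbabilityMeasure μ] :
    ∀ n, ∀ g : Γ, g ∈ (measSupport μ) ^ n → g ∈ measSupport (convPow μ n) := by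
  intro n
  induction n with
  | zero =>
    intro g hg
    rw [pow_zero, Set.mem_one] at hg
    subst hg
    unfold measSupport convPow
    simp only [Set.mem_setOf_eq]
    rw [Measure.dirac_apply' _ (meas_all _)]
    simp
  | succ n ih =>
    intro g hg
    rw [pow_succ] at hg
    rw [Set.mem_mul] at hg
    obtain ⟨x, hx, y, hy, hxy⟩ := hg
    haveI := convPow_isProb μ n
    have hx' := ih x hx
    unfold measSupport at hx' hy ⊢
    simp only [Set.mem_setOf_eq] at hx' hy ⊢
    show mconv (convPow μ n) μ {g} ≠ 0
    unfold mconv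
    rw [Measure.map_apply measurable_mul2 (meas_all _)]
    have hsub : ({x} : Set Γ) ×ˢ ({y} : Set Γ) ⊆ (fun p : Γ × Γ => p.1 * p.2) ⁻¹' {g} := by
      rintro ⟨p1, p2⟩ ⟨hp1, hp2⟩
      simp only [Set.mem_singleton_iff] at hp1 hp2
      simp [hp1, hp2, hxy]
    have hge := measure_mono (μ := (convPow μ n).prod μ) hsub
    rw [Measure.prod_prod] at hge
    intro h0
    rw [h0] at hge
    exact (mul_ne_zero hx' hy) (le_antisymm hge zero_le)

end MeasPart

section Triples

/-- coordinates of a boolean triple -/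
def tup (t : Bool × Bool × Bool) : ℕ → Bool :=
  fun s => if s = 0 then t.1 else if s = 1 then t.2.1 else t.2.2

lemma tup_diff {t u : Bool × Bool × Bool} (h : t ≠ u) :
    ∃ r, r < 3 ∧ tup t r ≠ tup u r ∧ ∀ s, s < r → tup t s = tup u s := by
  obtain ⟨t1, t2, t3⟩ := t
  obtain ⟨u1, u2, u3⟩ := u
  by_cases h1 : t1 = u1
  · by_cases h2 : t2 = u2
    · have h3 : t3 ≠ u3 := by
        intro h3
        exact h (by rw [h1, h2, h3])
      exact ⟨2, by omega, by simpa [tup], fun s hs => by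
        interval_cases s <;> simp [tup, h1, h2]⟩
    · exact ⟨1, by omega, by simpa [tup], fun s hs => by
        interval_cases s <;> simp [tup, h1]⟩
  · exact ⟨0, by omega, by simpa [tup], fun s hs => by omega⟩

/-- triple reversal -/
def trev (t : Bool × Bool × Bool) : Bool × Bool × Bool := (t.2.2, t.2.1, t.1)

lemma trev_ne {t u : Bool × Bool × Bool} (h : t ≠ u) : trev t ≠ trev u := by
  obtain ⟨t1, t2, t3⟩ := t
  obtain ⟨u1, u2, u3⟩ := u
  simp only [trev, ne_eq, Prod.mk.injEq, not_and]
  intro h1 h2 h3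
  exact h (by rw [h3, h2, h1])

lemma tup_trev (t : Bool × Bool × Bool) : ∀ s, s < 3 → tup (trev t) s = tup t (2 - s) := by
  intro s hs
  interval_cases s <;> simp [tup, trev]

end Triples

lemma exists_eq_val {α : Sort*} (x : α) : ∃ y, y = x := ⟨x, rfl⟩

section MainAux

variable {X : Type*} [MetricSpace X] {Γ : Type*} [Group Γ] [MulAction Γ X] {z0 : X}

lemma gp_orbit_identity (hiso : IsIsomAction Γ X) (w : Γ) (z : X) :
    gp z0 (w • z) (w • z0) = dist z0 (w • z0) - gp z0 z (w⁻¹ • z0) := by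
  have e0 : (z0 : X) = w • (w⁻¹ • z0) := (smul_inv_smul w z0).symm
  have e1 : gp z0 (w • z) (w • z0) = gp (w⁻¹ • z0) z z0 := by
    nth_rewrite 1 [e0]
    exact gp_smul hiso w _ _ _
  have e2 := gp_sum (w⁻¹ • z0) z0 z
  have e3 : dist (w⁻¹ • z0) z0 = dist z0 (w • z0) := by
    rw [dist_comm, dist_smul_inv hiso]
  linarith [e1, e2, e3]

end MainAux

set_option maxHeartbeats 2000000 in
theorem exists_schottky_in_convolution_support'
    {X : Type*} [MetricSpace X] {Γ : Type*} [Group Γ] [Countable Γ]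
    [MeasurableSpace Γ] [MeasurableSingletonClass Γ] [MulAction Γ X]
    (hiso : IsIsomAction Γ X) (hgeo : GeodesicSpace X) (hhyp : GromovHyperbolic X)
    (z0 : X) (μ : Measure Γ) [IsProbabilityMeasure μ]
    (hne : NonElementary z0 μ) :
    ∃ p : ℕ, 0 < p ∧ ∃ S : Set Γ, S ⊆ measSupport (convPow μ p) ∧ IsSchottky z0 S := by
  classical
  obtain ⟨δ, hδ, hyp⟩ := hhyp
  obtain ⟨a, b, ha_cl, hb_cl, halox, hblox, hae, hbe, hcr⟩ := hne
  obtain ⟨la, ca, hla, hca, hQa⟩ := lox_bounds (z0 := z0) hiso halox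
  obtain ⟨lb, cb0, hlb, hcb0, hQb⟩ := lox_bounds (z0 := z0) hiso hblox
  have hray_t : ∀ (g : Γ) (n : ℕ), raySeq z0 g true n = (g^n) • z0 := by
    intro g n; unfold raySeq; rw [if_pos rfl, zpow_natCast]
  have hray_f : ∀ (g : Γ) (n : ℕ), raySeq z0 g false n = ((g⁻¹)^n) • z0 := by
    intro g n; unfold raySeq
    rw [if_neg (by simp), zpow_neg, zpow_natCast, inv_pow]
  have hQa' : ∀ k : ℕ, dist z0 (((a⁻¹)^k) • z0) = dist z0 ((a^k) • z0) := by
    intro k; rw [inv_pow]; exact dist_smul_inv hiso _ z0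
  have hQb' : ∀ k : ℕ, dist z0 (((b⁻¹)^k) • z0) = dist z0 ((b^k) • z0) := by
    intro k; rw [inv_pow]; exact dist_smul_inv hiso _ z0
  -- frequently bounded Gromov products along the diagonals
  obtain ⟨Ma, hMa0, hfa0⟩ := not_sameEnd_freq (z0 := z0) hae
  obtain ⟨Mb, hMb0, hfb0⟩ := not_sameEnd_freq (z0 := z0) hbe
  obtain ⟨M1, hM10, hf10⟩ := not_sameEnd_freq (z0 := z0) (hcr false true)
  obtain ⟨M2, hM20, hf20⟩ := not_sameEnd_freq (z0 := z0) (hcr true false)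
  obtain ⟨M3, hM30, hf30⟩ := not_sameEnd_freq (z0 := z0) (hcr true true)
  obtain ⟨M4, hM40, hf40⟩ := not_sameEnd_freq (z0 := z0) (hcr false false)
  have hfa : ∀ N : ℕ, ∃ n, N ≤ n ∧ gp z0 ((a^n) • z0) (((a⁻¹)^n) • z0) ≤ Ma := by
    intro N; obtain ⟨n, hn, h⟩ := hfa0 N
    exact ⟨n, hn, by rwa [hray_t, hray_f] at h⟩
  have hfb : ∀ N : ℕ, ∃ n, N ≤ n ∧ gp z0 ((b^n) • z0) (((b⁻¹)^n) • z0) ≤ Mb := by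
    intro N; obtain ⟨n, hn, h⟩ := hfb0 N
    exact ⟨n, hn, by rwa [hray_t, hray_f] at h⟩
  have hf1 : ∀ N : ℕ, ∃ n, N ≤ n ∧ gp z0 (((a⁻¹)^n) • z0) ((b^n) • z0) ≤ M1 := by
    intro N; obtain ⟨n, hn, h⟩ := hf10 N
    exact ⟨n, hn, by rwa [hray_t, hray_f] at h⟩
  have hf2 : ∀ N : ℕ, ∃ n, N ≤ n ∧ gp z0 ((a^n) • z0) (((b⁻¹)^n) • z0) ≤ M2 := by
    intro N; obtain ⟨n, hn, h⟩ := hf20 N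
    exact ⟨n, hn, by rwa [hray_t, hray_f] at h⟩
  have hf3 : ∀ N : ℕ, ∃ n, N ≤ n ∧ gp z0 ((a^n) • z0) ((b^n) • z0) ≤ M3 := by
    intro N; obtain ⟨n, hn, h⟩ := hf30 N
    exact ⟨n, hn, by rwa [hray_t, hray_t] at h⟩
  have hf4 : ∀ N : ℕ, ∃ n, N ≤ n ∧ gp z0 (((a⁻¹)^n) • z0) (((b⁻¹)^n) • z0) ≤ M4 := by
    intro N; obtain ⟨n, hn, h⟩ := hf40 N
    exact ⟨n, hn, by rwa [hray_f, hray_f] at h⟩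
  -- choice of the basic powers nA, nB
  obtain ⟨nA, hnAge, hA1'⟩ := hfa (max 1 ⌈la*(2*Ma+4*δ+1+ca)⌉₊)
  obtain ⟨nB, hnBge, hB1'⟩ := hfb (max 1 ⌈lb*(2*Mb+4*δ+1+cb0)⌉₊)
  have hnA1 : 1 ≤ nA := le_trans (le_max_left _ _) hnAge
  have hnB1 : 1 ≤ nB := le_trans (le_max_left _ _) hnBge
  have hA1 : gp z0 ((a^nA)⁻¹ • z0) ((a^nA) • z0) ≤ Ma := by
    rw [inv_pow] at hA1'
    rw [gp_symm]; exact hA1'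
  have hB1 : gp z0 ((b^nB)⁻¹ • z0) ((b^nB) • z0) ≤ Mb := by
    rw [inv_pow] at hB1'
    rw [gp_symm]; exact hB1'
  have hdisp_of : ∀ (g : Γ) (lg cg R : ℝ) (k : ℕ), 1 ≤ lg → 0 ≤ cg →
      ((k:ℝ)/lg - cg ≤ dist z0 ((g^k) • z0)) → lg*(R+cg) ≤ (k:ℝ) →
      R ≤ dist z0 ((g^k) • z0) := by
    intro g lg cg R k hlg hcg hQ hk
    have hlg0 : (0:ℝ) < lg := by linarith
    have : R + cg ≤ (k:ℝ)/lg := by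
      rw [le_div_iff₀ hlg0]
      nlinarith
    linarith
  have hA2 : 2*Ma+4*δ+1 ≤ dist z0 ((a^nA) • z0) := by
    apply hdisp_of a la ca _ nA hla hca (hQa nA).1
    calc la*(2*Ma+4*δ+1+ca) ≤ (⌈la*(2*Ma+4*δ+1+ca)⌉₊ : ℝ) := Nat.le_ceil _
      _ ≤ (nA : ℝ) := by
          exact_mod_cast le_trans (le_max_right _ _) hnAge
  have hB2 : 2*Mb+4*δ+1 ≤ dist z0 ((b^nB) • z0) := by
    apply hdisp_of b lb cb0 _ nB hlb hcb0 (hQb nB).1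
    calc lb*(2*Mb+4*δ+1+cb0) ≤ (⌈lb*(2*Mb+4*δ+1+cb0)⌉₊ : ℝ) := Nat.le_ceil _
      _ ≤ (nB : ℝ) := by
          exact_mod_cast le_trans (le_max_right _ _) hnBge
  -- inverse-letter data
  have hA1inv : gp z0 (((a⁻¹)^nA)⁻¹ • z0) (((a⁻¹)^nA) • z0) ≤ Ma := by
    rw [inv_pow, inv_inv, gp_symm]
    exact hA1
  have hB1inv : gp z0 (((b⁻¹)^nB)⁻¹ • z0) (((b⁻¹)^nB) • z0) ≤ Mb := by
    rw [inv_pow, inv_inv, gp_symm]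
    exact hB1
  have hA2inv : 2*Ma+4*δ+1 ≤ dist z0 (((a⁻¹)^nA) • z0) := by rw [hQa']; exact hA2
  have hB2inv : 2*Mb+4*δ+1 ≤ dist z0 (((b⁻¹)^nB) • z0) := by rw [hQb']; exact hB2
  have hQainv : ∀ k : ℕ, (k:ℝ)/la - ca ≤ dist z0 (((a⁻¹)^k) • z0) ∧
      dist z0 (((a⁻¹)^k) • z0) ≤ la*k + ca := by
    intro k; rw [hQa']; exact hQa k
  have hQbinv : ∀ k : ℕ, (k:ℝ)/lb - cb0 ≤ dist z0 (((b⁻¹)^k) • z0) ∧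
      dist z0 (((b⁻¹)^k) • z0) ≤ lb*k + cb0 := by
    intro k; rw [hQb']; exact hQb k
  -- the four transfers
  obtain ⟨N1, hN11, hT1⟩ := transfer hδ hyp hiso hnA1 hnB1 hMa0 hMb0 hM10
    hA1inv hA2inv hB1 hB2 hla hca hlb hcb0 hQainv hQb hf1
  obtain ⟨N2, hN21, hT2⟩ := transfer hδ hyp hiso hnA1 hnB1 hMa0 hMb0 hM20
    hA1 hA2 hB1inv hB2inv hla hca hlb hcb0 hQa hQbinv hf2
  obtain ⟨N3, hN31, hT3⟩ := transfer hδ hyp hiso hnA1 hnB1 hMa0 hMb0 hM30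
    hA1 hA2 hB1 hB2 hla hca hlb hcb0 hQa hQb hf3
  obtain ⟨N4, hN41, hT4⟩ := transfer hδ hyp hiso hnA1 hnB1 hMa0 hMb0 hM40
    hA1inv hA2inv hB1inv hB2inv hla hca hlb hcb0 hQainv hQbinv hf4
  -- the global constant K
  obtain ⟨Km, hKm⟩ := exists_eq_val (max Ma (max Mb (max M1 (max M2 (max M3 M4)))))
  obtain ⟨K, hKdef⟩ := exists_eq_val (Km + 2*δ)
  have hKm0 : 0 ≤ Km := by rw [hKm]; exact le_trans hMa0 (le_max_left _ _)
  have hK0 : 0 ≤ K := by rw [hKdef]; linarith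
  have hMaK : Ma + 2*δ ≤ K := by
    have : Ma ≤ Km := by rw [hKm]; exact le_max_left _ _
    linarith
  have hMbK : Mb + 2*δ ≤ K := by
    have : Mb ≤ Km := by rw [hKm]; exact le_trans (le_max_left _ _) (le_max_right _ _)
    linarith
  have hM1K : M1 + 2*δ ≤ K := by
    have : M1 ≤ Km := by
      rw [hKm]
      exact le_trans (le_trans (le_max_left _ _) (le_max_right _ _)) (le_max_right _ _)
    linarith
  have hM2K : M2 + 2*δ ≤ K := by
    have : M2 ≤ Km := by
      rw [hKm]
      exact le_trans (le_trans (le_trans (le_max_left _ _) (le_max_right _ _))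
        (le_max_right _ _)) (le_max_right _ _)
    linarith
  have hM3K : M3 + 2*δ ≤ K := by
    have : M3 ≤ Km := by
      rw [hKm]
      exact le_trans (le_trans (le_trans (le_trans (le_max_left _ _) (le_max_right _ _))
        (le_max_right _ _)) (le_max_right _ _)) (le_max_right _ _)
    linarith
  have hM4K : M4 + 2*δ ≤ K := by
    have : M4 ≤ Km := by
      rw [hKm]
      exact le_trans (le_trans (le_trans (le_trans (le_max_right _ _) (le_max_right _ _))
        (le_max_right _ _)) (le_max_right _ _)) (le_max_right _ _)
    linarith
  -- word lengths in the support
  obtain ⟨α, hα1, haB⟩ := exists_pow_of_mem_closure ha_cl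
  obtain ⟨βl, hβ1, hbB⟩ := exists_pow_of_mem_closure hb_cl
  -- choice of t
  obtain ⟨t, ht⟩ := exists_eq_val (max (max N1 (max N2 (max N3 N4))) (max 1 (max (⌈la*(2*K+4*δ+1+ca)⌉₊) (⌈lb*(2*K+4*δ+1+cb0)⌉₊))))
  have ht1 : 1 ≤ t := by rw [ht]; exact le_trans (le_max_left 1 _) (le_max_right _ _)
  obtain ⟨sA, hsA⟩ := exists_eq_val (nB * βl * t)
  obtain ⟨sB, hsB⟩ := exists_eq_val (nA * α * t)
  have htsA : t ≤ sA := by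
    rw [hsA]
    calc t = 1 * t := (one_mul t).symm
      _ ≤ nB * βl * t := Nat.mul_le_mul_right t
          (Nat.one_le_iff_ne_zero.2 (Nat.mul_ne_zero (by omega) (by omega)))
  have htsB : t ≤ sB := by
    rw [hsB]
    calc t = 1 * t := (one_mul t).symm
      _ ≤ nA * α * t := Nat.mul_le_mul_right t
          (Nat.one_le_iff_ne_zero.2 (Nat.mul_ne_zero (by omega) (by omega)))
  have hsA1 : 1 ≤ sA := le_trans ht1 htsA
  have hsB1 : 1 ≤ sB := le_trans ht1 htsB
  have hsAN : ∀ N, N ≤ max N1 (max N2 (max N3 N4)) → N ≤ sA := by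
    intro N hN
    refine le_trans ?_ htsA
    rw [ht]
    exact le_trans hN (le_max_left _ _)
  have hsBN : ∀ N, N ≤ max N1 (max N2 (max N3 N4)) → N ≤ sB := by
    intro N hN
    refine le_trans ?_ htsB
    rw [ht]
    exact le_trans hN (le_max_left _ _)
  obtain ⟨p, hp⟩ := exists_eq_val (nA * sA)
  obtain ⟨q, hq⟩ := exists_eq_val (nB * sB)
  have hp1 : 1 ≤ p := by
    rw [hp]; exact Nat.one_le_iff_ne_zero.2 (Nat.mul_ne_zero (by omega) (by omega))
  have hq1 : 1 ≤ q := by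
    rw [hq]; exact Nat.one_le_iff_ne_zero.2 (Nat.mul_ne_zero (by omega) (by omega))
  have htp : t ≤ p := le_trans htsA (by rw [hp]; exact Nat.le_mul_of_pos_left sA hnA1)
  have htq : t ≤ q := le_trans htsB (by rw [hq]; exact Nat.le_mul_of_pos_left sB hnB1)
  -- the two long letters
  obtain ⟨A, hAdef⟩ := exists_eq_val (a ^ p)
  obtain ⟨B, hBdef⟩ := exists_eq_val (b ^ q)
  have hdA : 2*K+4*δ+1 ≤ dist z0 (A • z0) := by
    rw [hAdef]
    apply hdisp_of a la ca _ p hla hca (hQa p).1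
    calc la*(2*K+4*δ+1+ca) ≤ (⌈la*(2*K+4*δ+1+ca)⌉₊ : ℝ) := Nat.le_ceil _
      _ ≤ (t : ℝ) := by
          have : ⌈la*(2*K+4*δ+1+ca)⌉₊ ≤ t := by
            rw [ht]
            exact le_trans (le_trans (le_max_left _ _) (le_max_right 1 _)) (le_max_right _ _)
          exact_mod_cast this
      _ ≤ (p : ℝ) := by exact_mod_cast htp
  have hdB : 2*K+4*δ+1 ≤ dist z0 (B • z0) := by
    rw [hBdef]
    apply hdisp_of b lb cb0 _ q hlb hcb0 (hQb q).1
    calc lb*(2*K+4*δ+1+cb0) ≤ (⌈lb*(2*K+4*δ+1+cb0)⌉₊ : ℝ) := Nat.le_ceil _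
      _ ≤ (t : ℝ) := by
          have : ⌈lb*(2*K+4*δ+1+cb0)⌉₊ ≤ t := by
            rw [ht]
            exact le_trans (le_trans (le_max_right _ _) (le_max_right 1 _)) (le_max_right _ _)
          exact_mod_cast this
      _ ≤ (q : ℝ) := by exact_mod_cast htq
  -- the six product bounds
  have g1 : gp z0 (A⁻¹ • z0) (A • z0) ≤ K := by
    have h := lox_sep hδ hyp hiso hMa0 hA1 hA2 hsA1 hsA1
    rw [inv_pow, ← pow_mul, ← hp, ← hAdef] at h
    exact le_trans h hMaK
  have g2 : gp z0 (B⁻¹ • z0) (B • z0) ≤ K := by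
    have h := lox_sep hδ hyp hiso hMb0 hB1 hB2 hsB1 hsB1
    rw [inv_pow, ← pow_mul, ← hq, ← hBdef] at h
    exact le_trans h hMbK
  have g3 : gp z0 (A⁻¹ • z0) (B • z0) ≤ K := by
    have h := hT1 sA sB (hsAN N1 (le_max_left _ _))
      (hsBN N1 (le_max_left _ _))
    rw [inv_pow, ← hp, ← hq, ← hAdef, ← hBdef] at h
    exact le_trans h hM1K
  have g4 : gp z0 (B⁻¹ • z0) (A • z0) ≤ K := by
    have h := hT2 sA sB (hsAN N2 (le_trans (le_max_left _ _) (le_max_right _ _)))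
      (hsBN N2 (le_trans (le_max_left _ _) (le_max_right _ _)))
    rw [inv_pow, ← hp, ← hq, ← hAdef, ← hBdef, gp_symm] at h
    exact le_trans h hM2K
  have g5 : gp z0 (A • z0) (B • z0) ≤ K := by
    have h := hT3 sA sB
      (hsAN N3 (le_trans (le_trans (le_max_left _ _) (le_max_right _ _)) (le_max_right _ _)))
      (hsBN N3 (le_trans (le_trans (le_max_left _ _) (le_max_right _ _)) (le_max_right _ _)))
    rw [← hp, ← hq, ← hAdef, ← hBdef] at h
    exact le_trans h hM3K
  have g6 : gp z0 (A⁻¹ • z0) (B⁻¹ • z0) ≤ K := by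
    have h := hT4 sA sB
      (hsAN N4 (le_trans (le_trans (le_max_right _ _) (le_max_right _ _)) (le_max_right _ _)))
      (hsBN N4 (le_trans (le_trans (le_max_right _ _) (le_max_right _ _)) (le_max_right _ _)))
    rw [inv_pow, inv_pow, ← hp, ← hq, ← hAdef, ← hBdef] at h
    exact le_trans h hM4K
  -- the letter function
  obtain ⟨E, hE⟩ := exists_eq_val (fun pq : Bool => if pq then A else B)
  have hEt : E true = A := by simp [hE]
  have hEf : E false = B := by simp [hE]
  have hEE : ∀ pq q' : Bool, gp z0 ((E pq)⁻¹ • z0) ((E q') • z0) ≤ K := by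
    intro pq q'
    cases pq <;> cases q' <;> simp only [hEt, hEf]
    · exact g2
    · exact g4
    · exact g3
    · exact g1
  have hbrE : gp z0 ((E true) • z0) ((E false) • z0) ≤ K := by
    rw [hEt, hEf]; exact g5
  obtain ⟨Jm, hJm⟩ := exists_eq_val (max (dist z0 (A • z0)) (dist z0 (B • z0)))
  have hJm0 : 0 ≤ Jm := by rw [hJm]; exact le_trans dist_nonneg (le_max_left _ _)
  have hE2' : ∀ pq : Bool, 2*K+4*δ+1 ≤ dist z0 ((E pq) • z0) := by
    intro pq
    cases pq <;> simp only [hEt, hEf]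
    · exact hdB
    · exact hdA
  have hE3' : ∀ pq : Bool, dist z0 ((E pq) • z0) ≤ Jm := by
    intro pq
    cases pq <;> simp only [hEt, hEf] <;> rw [hJm]
    · exact le_max_right _ _
    · exact le_max_left _ _
  obtain ⟨D, hD⟩ := exists_eq_val (2*Jm + (K + 2*δ))
  have hD0 : 0 ≤ D := by rw [hD]; linarith
  obtain ⟨m, hm⟩ := exists_eq_val (max 6 (⌈2*D + 3*δ + 2⌉₊))
  have hm6 : 6 ≤ m := by rw [hm]; exact le_max_left _ _
  have hmR : 2*D + 3*δ + 2 ≤ (m:ℝ) := by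
    calc 2*D + 3*δ + 2 ≤ (⌈2*D + 3*δ + 2⌉₊ : ℝ) := Nat.le_ceil _
      _ ≤ (m : ℝ) := by
          have : ⌈2*D + 3*δ + 2⌉₊ ≤ m := by rw [hm]; exact le_max_right 6 _
          exact_mod_cast this
  obtain ⟨bits, hbits⟩ := exists_eq_val (fun (tr : Bool × Bool × Bool) (s : ℕ) => if s < 3 then tup tr s else if m - 3 ≤ s then tup tr (s-(m-3)) else true)
  obtain ⟨W, hWdef⟩ := exists_eq_val (fun tr => wpp (fun s => E (bits tr s)) m)
  -- length of each word
  have hWlen : ∀ tr, 2*D + 3*δ + 2 ≤ dist z0 ((W tr) • z0) := by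
    intro tr
    have h := word_dist hδ hyp hiso hK0 hEE hE2' (bits tr) m
    have hmm : (m:ℝ) ≤ (2*δ+1)*(m:ℝ) := by nlinarith [Nat.cast_nonneg (α := ℝ) m]
    simp only [hWdef]
    linarith
  -- forward separation
  have hWfwd : ∀ tr ur, tr ≠ ur → gp z0 ((W tr) • z0) ((W ur) • z0) ≤ D := by
    intro tr ur hnetr
    obtain ⟨r, hr3, hdiff, hagree⟩ := tup_diff hnetr
    have hagree' : ∀ s, s < r → bits tr s = bits ur s := by
      intro s hs
      have hs3 : s < 3 := by omega
      simp only [hbits, if_pos hs3]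
      exact hagree s hs
    have hdiff' : bits tr r ≠ bits ur r := by
      simp only [hbits, if_pos hr3]
      exact hdiff
    have h := word_div hδ hyp hiso hK0 hEE hbrE hE2' hE3'
      (show r+1 ≤ m by omega) hagree' hdiff'
    simp only [hWdef]
    refine le_trans h ?_
    have hr2 : (r:ℝ) ≤ 2 := by exact_mod_cast (show r ≤ 2 by omega)
    rw [hD]
    nlinarith [hJm0]
  -- reversal facts
  have hrev : ∀ tr, wpp (fun s => (E (bits tr (m-1-s)))⁻¹) m = (W tr)⁻¹ := by
    intro tr
    simp only [hWdef]
    exact wpp_rev (fun s => E (bits tr s)) m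
  have hbits_hi : ∀ tr s, s < 3 → bits tr (m-1-s) = tup (trev tr) s := by
    intro tr s hs
    have h1 : ¬ (m-1-s < 3) := by omega
    have h2 : m - 3 ≤ m-1-s := by omega
    simp only [hbits, if_neg h1, if_pos h2]
    rw [show (m-1-s)-(m-3) = 2-s from by omega, ← tup_trev tr s hs]
  have hEEi : ∀ pq q' : Bool, gp z0 (((E pq)⁻¹)⁻¹ • z0) (((E q')⁻¹) • z0) ≤ K := by
    intro pq q'
    rw [inv_inv]
    cases pq <;> cases q' <;> simp only [hEt, hEf] <;> rw [gp_symm]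
    · exact g2
    · exact g3
    · exact g4
    · exact g1
  have hbrEi : gp z0 ((E true)⁻¹ • z0) ((E false)⁻¹ • z0) ≤ K := by
    rw [hEt, hEf]; exact g6
  have hE2i : ∀ pq : Bool, 2*K+4*δ+1 ≤ dist z0 ((E pq)⁻¹ • z0) := by
    intro pq; rw [dist_smul_inv hiso _ z0]; exact hE2' pq
  have hE3i : ∀ pq : Bool, dist z0 ((E pq)⁻¹ • z0) ≤ Jm := by
    intro pq; rw [dist_smul_inv hiso _ z0]; exact hE3' pq
  -- backward separation
  have hWbwd : ∀ tr ur, tr ≠ ur → gp z0 ((W tr)⁻¹ • z0) ((W ur)⁻¹ • z0) ≤ D := by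
    intro tr ur hnetr
    obtain ⟨r, hr3, hdiff, hagree⟩ := tup_diff (trev_ne hnetr)
    have hagree' : ∀ s, s < r → bits tr (m-1-s) = bits ur (m-1-s) := by
      intro s hs
      rw [hbits_hi tr s (by omega), hbits_hi ur s (by omega)]
      exact hagree s hs
    have hdiff' : bits tr (m-1-r) ≠ bits ur (m-1-r) := by
      rw [hbits_hi tr r hr3, hbits_hi ur r hr3]
      exact hdiff
    have h := word_div (E := fun x => (E x)⁻¹)
      (β := fun s => bits tr (m-1-s)) (γ := fun s => bits ur (m-1-s))
      hδ hyp hiso hK0 hEEi hbrEi hE2i hE3i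
      (show r+1 ≤ m by omega) hagree' hdiff'
    have h' : gp z0 ((wpp (fun s => (E (bits tr (m-1-s)))⁻¹) m) • z0)
        ((wpp (fun s => (E (bits ur (m-1-s)))⁻¹) m) • z0) ≤ r * Jm + (K + 2*δ) := h
    rw [hrev tr, hrev ur] at h'
    refine le_trans h' ?_
    have hr2 : (r:ℝ) ≤ 2 := by exact_mod_cast (show r ≤ 2 by omega)
    rw [hD]
    nlinarith [hJm0]
  -- injectivity
  have hWinj : Function.Injective W := by
    intro tr ur heq
    by_contra hnetr
    have h1 := hWfwd tr ur hnetr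
    rw [heq, gp_self_right] at h1
    have h2 := hWlen ur
    linarith
  -- membership in powers of the support
  obtain ⟨P0, hP0⟩ := exists_eq_val (p * α)
  have hletters_mem : ∀ pq : Bool, E pq ∈ (measSupport μ) ^ P0 := by
    intro pq
    cases pq <;> simp only [hEt, hEf]
    · have h := Set.pow_mem_pow hbB (n := q)
      rw [← pow_mul] at h
      have e : βl * q = P0 := by rw [hP0, hp, hq, hsA, hsB]; ring
      rw [e] at h
      rw [hBdef]
      exact h
    · have h := Set.pow_mem_pow haB (n := p)
      rw [← pow_mul] at h
      have e : α * p = P0 := by rw [hP0]; ring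
      rw [e] at h
      rw [hAdef]
      exact h
  have hWmem : ∀ tr, W tr ∈ (measSupport μ) ^ (m * P0) := by
    intro tr
    simp only [hWdef]
    exact wpp_mem_pow m (fun s _ => hletters_mem (bits tr s))
  -- final assembly
  refine ⟨m * P0, ?_, Set.range W, ?_, ?_⟩
  · have hP01 : 1 ≤ P0 := by
      rw [hP0]
      exact Nat.one_le_iff_ne_zero.2 (Nat.mul_ne_zero (by omega) (by omega))
    exact Nat.mul_pos (by omega) hP01
  · rintro g ⟨tr, rfl⟩
    exact supp_convPow μ _ _ (hWmem tr)
  refine ⟨Set.finite_range W, ⟨W (true,true,true), Set.mem_range_self _⟩,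
    D + 3*δ + 1, by linarith, ?_⟩
  intro y z
  -- cardinality of S
  have hS8 : (Set.range W).ncard = 8 := by
    rw [← Set.image_univ, Set.ncard_image_of_injective _ hWinj, Set.ncard_univ]
    simp [Nat.card_eq_fintype_card]
  -- at most one bad word of each type
  have key1 : ∀ t1 u1 : Bool × Bool × Bool, t1 ≠ u1 →
      (D+δ+1 < gp z0 z ((W t1)⁻¹ • z0)) → (D+δ+1 < gp z0 z ((W u1)⁻¹ • z0)) → False := by
    intro t1 u1 htu h3 h4
    have hmin := hyp z0 ((W t1)⁻¹ • z0) ((W u1)⁻¹ • z0) z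
    have hbd := hWbwd t1 u1 htu
    have := lt_min h3 h4
    linarith
  have key2 : ∀ t1 u1 : Bool × Bool × Bool, t1 ≠ u1 →
      (D+3*δ+1 < gp z0 y ((W t1) • z)) → (D+3*δ+1 < gp z0 y ((W u1) • z)) →
      (gp z0 z ((W t1)⁻¹ • z0) ≤ D+δ+1) → (gp z0 z ((W u1)⁻¹ • z0) ≤ D+δ+1) → False := by
    intro t1 u1 htu h1 h2 h3 h4
    have hFt : D + 2*δ + 1 ≤ gp z0 ((W t1) • z) ((W t1) • z0) := by
      rw [gp_orbit_identity hiso]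
      have := hWlen t1
      linarith
    have hFu : D + 2*δ + 1 ≤ gp z0 ((W u1) • z) ((W u1) • z0) := by
      rw [gp_orbit_identity hiso]
      have := hWlen u1
      linarith
    have hq1 : D + 2*δ + 1 ≤ gp z0 ((W t1) • z) ((W u1) • z) := by
      have hmin := hyp z0 ((W t1) • z) ((W u1) • z) y
      have := lt_min h1 h2
      linarith
    have hq2 : D + δ + 1 ≤ gp z0 ((W t1) • z0) ((W u1) • z) := by
      have hmin := hyp z0 ((W t1) • z0) ((W u1) • z) ((W t1) • z)
      have hlb := le_min hFt hq1
      linarith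
    have hm1 : D + δ + 1 ≤ gp z0 ((W u1) • z) ((W t1) • z0) := by
      rw [gp_symm]; exact hq2
    have hm2 : D + δ + 1 ≤ gp z0 ((W u1) • z) ((W u1) • z0) := by linarith
    have hmin := hyp z0 ((W t1) • z0) ((W u1) • z0) ((W u1) • z)
    have hfwd := hWfwd t1 u1 htu
    have hlb := le_min hm1 hm2
    linarith
  -- the bad set is contained in a pair
  have hpair : ∃ t1 t2 : Bool × Bool × Bool,
      ∀ tr, D+3*δ+1 < gp z0 y ((W tr) • z) → tr = t1 ∨ tr = t2 := by
    by_cases hex : ∃ t1, (D+3*δ+1 < gp z0 y ((W t1) • z)) ∧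
        (D+δ+1 < gp z0 z ((W t1)⁻¹ • z0))
    · obtain ⟨t1, hb1, hR1⟩ := hex
      by_cases hex2 : ∃ t2, (D+3*δ+1 < gp z0 y ((W t2) • z)) ∧
          ¬(D+δ+1 < gp z0 z ((W t2)⁻¹ • z0))
      · obtain ⟨t2, hb2, hR2⟩ := hex2
        refine ⟨t1, t2, fun tr htr => ?_⟩
        by_cases hR : D+δ+1 < gp z0 z ((W tr)⁻¹ • z0)
        · left; by_contra hnetr; exact key1 tr t1 hnetr hR hR1
        · right; by_contra hnetr
          exact key2 tr t2 hnetr htr hb2 (not_lt.1 hR) (not_lt.1 hR2)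
      · refine ⟨t1, t1, fun tr htr => ?_⟩
        by_cases hR : D+δ+1 < gp z0 z ((W tr)⁻¹ • z0)
        · left; by_contra hnetr; exact key1 tr t1 hnetr hR hR1
        · exact absurd ⟨tr, htr, hR⟩ hex2
    · by_cases hex2 : ∃ t2, (D+3*δ+1 < gp z0 y ((W t2) • z)) ∧
          ¬(D+δ+1 < gp z0 z ((W t2)⁻¹ • z0))
      · obtain ⟨t2, hb2, hR2⟩ := hex2
        refine ⟨t2, t2, fun tr htr => ?_⟩
        by_cases hR : D+δ+1 < gp z0 z ((W tr)⁻¹ • z0)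
        · exact absurd ⟨tr, htr, hR⟩ hex
        · left; by_contra hnetr
          exact key2 tr t2 hnetr htr hb2 (not_lt.1 hR) (not_lt.1 hR2)
      · refine ⟨(true,true,true), (true,true,true), fun tr htr => ?_⟩
        by_cases hR : D+δ+1 < gp z0 z ((W tr)⁻¹ • z0)
        · exact absurd ⟨tr, htr, hR⟩ hex
        · exact absurd ⟨tr, htr, hR⟩ hex2
  obtain ⟨t1, t2, hpair⟩ := hpair
  -- the good set contains the image of the complement of the pair
  have hsub : W '' (Set.univ \ {t1, t2}) ⊆
      {s ∈ Set.range W | gp z0 y (s • z) ≤ D+3*δ+1} := by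
    rintro s ⟨tr, ⟨-, htr⟩, rfl⟩
    refine ⟨Set.mem_range_self tr, ?_⟩
    by_contra hc
    push_neg at hc
    rcases hpair tr hc with h | h <;> exact htr (by simp [h])
  have hfin : ({s ∈ Set.range W | gp z0 y (s • z) ≤ D+3*δ+1}).Finite :=
    (Set.finite_range W).subset (Set.sep_subset _ _)
  have hcard1 : 6 ≤ (W '' (Set.univ \ {t1, t2})).ncard := by
    rw [Set.ncard_image_of_injective _ hWinj]
    have h2 : ({t1, t2} : Set (Bool × Bool × Bool)).ncard ≤ 2 := by
      refine le_trans (Set.ncard_insert_le _ _) ?_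
      simp [Set.ncard_singleton]
    have h3 := Set.ncard_diff (Set.subset_univ ({t1, t2} : Set (Bool × Bool × Bool)))
    have huniv : (Set.univ : Set (Bool × Bool × Bool)).ncard = 8 := by
      rw [Set.ncard_univ]
      simp [Nat.card_eq_fintype_card]
    omega
  have h6 : 6 ≤ ({s ∈ Set.range W | gp z0 y (s • z) ≤ D+3*δ+1}).ncard :=
    le_trans hcard1 (Set.ncard_le_ncard hsub hfin)
  rw [hS8]
  have h6' : (6:ℝ) ≤ (({s ∈ Set.range W | gp z0 y (s • z) ≤ D+3*δ+1}).ncard : ℝ) := by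
    exact_mod_cast h6
  push_cast
  linarith

/-- **Proposition (existence of Schottky sets).** If `μ` is a non-elementary probability
measure on a group `Γ` acting by isometries on a geodesic Gromov-hyperbolic space, then
for some `p` the support of `μ^{*p}` contains a Schottky set. -/
theorem exists_schottky_in_convolution_support
    {X : Type*} [MetricSpace X] {Γ : Type*} [Group Γ] [Countable Γ]
    [MeasurableSpace Γ] [MeasurableSingletonClass Γ] [MulAction Γ X]
    (hiso : IsIsomAction Γ X) (hgeo : GeodesicSpace X) (hhyp : GromovHyperbolic X)
    (z0 : X) (μ : Measure Γ) [IsProbabilityMeasure μ]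
    (hne : NonElementary z0 μ) :
    ∃ p : ℕ, 0 < p ∧ ∃ S : Set Γ, S ⊆ measSupport (convPow μ p) ∧ IsSchottky z0 S := by
  exact exists_schottky_in_convolution_support' hiso hgeo hhyp z0 μ hne

end BMS
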